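/- Every elementary divisor ring is an SE₂ ring, i.e., if R is an elementary divisor ring then every unimodular 2×2 matrix over R is simply extendable. -/
import Mathlib


open Matrix

/-- A `2 × 2` matrix is unimodular if its four entries generate the unit ideal. -/
def Unimodular2 {R : Type*} [CommRing R] (A : Matrix (Fin 2) (Fin 2) R) : Prop :=
  Ideal.span {A 0 0, A 0 1, A 1 0, A 1 1} = ⊤

/-- A `2 × 2` matrix is extendable if it is the top-left block of a `3 × 3` matrix
of determinant `1`. -/
def Extendable {R : Type*} [CommRing R] (A : Matrix (Fin 2) (Fin 2) R) : Prop :=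
  ∃ B : Matrix (Fin 3) (Fin 3) R, B.det = 1 ∧
    ∀ i j : Fin 2, B i.castSucc j.castSucc = A i j

/-- A `2 × 2` matrix is simply extendable if it is the top-left block of a `3 × 3` matrix
of determinant `1` whose `(3,3)` entry is `0`. -/
def SimplyExtendable {R : Type*} [CommRing R] (A : Matrix (Fin 2) (Fin 2) R) : Prop :=
  ∃ B : Matrix (Fin 3) (Fin 3) R, B.det = 1 ∧
    (∀ i j : Fin 2, B i.castSucc j.castSucc = A i j) ∧ B 2 2 = 0

/-- Kaplansky-Hermite ring: every pair is a common multiple of a unimodular pair. -/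
def IsHermiteRing (R : Type*) [CommRing R] : Prop :=
  ∀ a b : R, ∃ d a₁ b₁ : R, a = d * a₁ ∧ b = d * b₁ ∧ Ideal.span {a₁, b₁} = ⊤

/-- An elementary divisor ring: every rectangular matrix admits diagonal reduction. -/
def IsEDR (R : Type*) [CommRing R] : Prop :=
  ∀ (m n : ℕ) (A : Matrix (Fin m) (Fin n) R),
    ∃ (M : Matrix (Fin m) (Fin m) R) (N : Matrix (Fin n) (Fin n) R),
      IsUnit M.det ∧ IsUnit N.det ∧
      (∀ (i : Fin m) (j : Fin n), (i : ℕ) ≠ (j : ℕ) → (M * A * N) i j = 0) ∧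
      (∀ k : ℕ, (hk : k + 1 < min m n) →
        (M * A * N) ⟨k, by omega⟩ ⟨k, by omega⟩ ∣
          (M * A * N) ⟨k + 1, by omega⟩ ⟨k + 1, by omega⟩)



def Crit {R : Type*} [CommRing R] (A : Matrix (Fin 2) (Fin 2) R) : Prop :=
  ∃ w v : Fin 2 → R, w ⬝ᵥ (A.adjugate *ᵥ v) = 1

lemma crit_imp {R : Type*} [CommRing R] (A : Matrix (Fin 2) (Fin 2) R) (h : Crit A) :
    ∃ B : Matrix (Fin 3) (Fin 3) R, B.det = 1 ∧
    (∀ i j : Fin 2, B i.castSucc j.castSucc = A i j) ∧ B 2 2 = 0 := by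
  obtain ⟨w, v, h⟩ := h
  rw [Matrix.adjugate_fin_two] at h
  simp [mulVec, dotProduct, Fin.sum_univ_two] at h
  refine ⟨!![A 0 0, A 0 1, v 0; A 1 0, A 1 1, v 1; -w 0, -w 1, 0], ?_, ?_, rfl⟩
  · simp [Matrix.det_fin_three]
    ring_nf
    ring_nf at h
    linear_combination h
  · intro i j
    fin_cases i <;> fin_cases j <;> rfl

lemma crit_mul {R : Type*} [CommRing R] (M A N : Matrix (Fin 2) (Fin 2) R)
    (h : Crit (M * A * N)) : Crit A := by
  obtain ⟨w, v, h⟩ := h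
  refine ⟨w ᵥ* N.adjugate, M.adjugate *ᵥ v, ?_⟩
  rw [← h, Matrix.adjugate_mul_distrib, Matrix.adjugate_mul_distrib,
    ← Matrix.mulVec_mulVec, ← Matrix.mulVec_mulVec]
  simp only [Matrix.dotProduct_mulVec]

theorem stmt9 (R : Type*) [CommRing R] (hEDR : IsEDR R) :
    ∀ A : Matrix (Fin 2) (Fin 2) R, Unimodular2 A → SimplyExtendable A := by
  intro A hA
  obtain ⟨M, N, hM, hN, hoff, hdiv⟩ := hEDR 2 2 A
  set D := M * A * N with hD
  have h01 : D 0 1 = 0 := hoff 0 1 (by decide)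
  have h10 : D 1 0 = 0 := hoff 1 0 (by decide)
  have hdvd : D 0 0 ∣ D 1 1 := hdiv 0 (by norm_num)
  have hA' : A = M⁻¹ * D * N⁻¹ := by
    have h1 : M⁻¹ * M = 1 := Matrix.nonsing_inv_mul M hM
    have h2 : N * N⁻¹ = 1 := Matrix.mul_nonsing_inv N hN
    have : M⁻¹ * (M * A * N) * N⁻¹ = (M⁻¹ * M) * A * (N * N⁻¹) := by
      noncomm_ring
    rw [hD, this, h1, h2, Matrix.one_mul, Matrix.mul_one]
  have hDmem : ∀ k l : Fin 2, D k l ∈ Ideal.span {D 0 0} := by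
    intro k l
    fin_cases k <;> fin_cases l
    · exact Ideal.subset_span rfl
    · exact h01 ▸ zero_mem _
    · exact h10 ▸ zero_mem _
    · exact Ideal.mem_span_singleton.2 hdvd
  have hAmem : ∀ i j : Fin 2, A i j ∈ Ideal.span {D 0 0} := by
    intro i j
    rw [hA', Matrix.mul_apply]
    refine Ideal.sum_mem _ fun l _ => ?_
    rw [Matrix.mul_apply]
    exact Ideal.mul_mem_right _ _
      (Ideal.sum_mem _ fun k _ => Ideal.mul_mem_left _ _ (hDmem k l))
  have hmem : (1 : R) ∈ Ideal.span {D 0 0} := by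
    have hle : Ideal.span {A 0 0, A 0 1, A 1 0, A 1 1} ≤ Ideal.span {D 0 0} := by
      apply Ideal.span_le.2
      intro x hx
      simp only [Set.mem_insert_iff, Set.mem_singleton_iff] at hx
      rcases hx with rfl | rfl | rfl | rfl
      exacts [hAmem 0 0, hAmem 0 1, hAmem 1 0, hAmem 1 1]
    exact hle (hA ▸ Submodule.mem_top)
  obtain ⟨e, he⟩ : D 0 0 ∣ 1 := Ideal.mem_span_singleton.1 hmem
  have hcD : Crit D := by
    refine ⟨![0, e], ![0, 1], ?_⟩
    rw [Matrix.adjugate_fin_two]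
    simp [mulVec, dotProduct, Fin.sum_univ_two, h01, h10]
    linear_combination -he
  exact crit_imp A (crit_mul M A N hcD)
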